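/- Let Q = {(0,0), (4,0), (4,3), (0,3), (2,2)} ⊂ ℝ². Then (a) there exist two closed convex polygons (with vertices not required to lie in Q) with pairwise disjoint interiors whose union is conv(Q) and such that no point of Q lies in the interior of either polygon; but (b) there do not exist two closed convex polygons, each with all its vertices in Q, with pairwise disjoint interiors, union equal to conv(Q), and no point of Q in the interior of either polygon. -/

import Mathlib

lemma lin2 (α β : ℝ) : IsLinearMap ℝ (fun p : ℝ × ℝ => α * p.1 + β * p.2) := by
  constructor
  · intro x y; simp [Prod.fst_add, Prod.snd_add]; ring
  · intro c x; simp [Prod.smul_fst, Prod.smul_snd, smul_eq_mul]; ring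

lemma force_mem {F : Finset (ℝ × ℝ)}
    (hF : (F : Set (ℝ × ℝ)) ⊆ ({(0,0),(4,0),(4,3),(0,3),(2,2)} : Set (ℝ × ℝ)))
    (v : ℝ × ℝ) (α β m : ℝ)
    (hQ : ∀ p ∈ ({(0,0),(4,0),(4,3),(0,3),(2,2)} : Set (ℝ × ℝ)), p ≠ v → α * p.1 + β * p.2 ≤ m)
    {t : ℝ × ℝ} (ht : t ∈ convexHull ℝ (F : Set (ℝ × ℝ))) (htm : m < α * t.1 + β * t.2) :
    v ∈ F := by
  by_contra hv
  have hsub : convexHull ℝ (F : Set (ℝ × ℝ)) ⊆ {p : ℝ × ℝ | α * p.1 + β * p.2 ≤ m} := by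
    apply convexHull_min
    · intro p hp
      exact hQ p (hF hp) (by rintro rfl; exact hv hp)
    · exact convex_halfSpace_le (lin2 α β) m
  exact absurd (hsub ht) (not_le.2 htm)

lemma key1 : ((2:ℝ), (2:ℝ)) ∈ interior (convexHull ℝ ({((0:ℝ),(0:ℝ)), (4,3), (0,3)} : Set (ℝ × ℝ))) := by
  rw [mem_interior]
  refine ⟨{p : ℝ × ℝ | 0 < p.1 ∧ p.2 < 3 ∧ 3 * p.1 < 4 * p.2}, ?_, ?_, by norm_num⟩
  · rintro ⟨x, y⟩ ⟨hx, hy, hxy⟩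
    have hy0 : 0 < y := by linarith
    set S : Set (ℝ × ℝ) := {((0:ℝ),(0:ℝ)), (4,3), (0,3)} with hS
    have hC := convex_convexHull ℝ S
    have ha : ((0:ℝ),(0:ℝ)) ∈ convexHull ℝ S := subset_convexHull ℝ S (by simp [hS])
    have hc : ((4:ℝ),(3:ℝ)) ∈ convexHull ℝ S := subset_convexHull ℝ S (by simp [hS])
    have hd : ((0:ℝ),(3:ℝ)) ∈ convexHull ℝ S := subset_convexHull ℝ S (by simp [hS])
    have hq : ((3*x/y, 3) : ℝ × ℝ) ∈ convexHull ℝ S := by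
      have h1 : (0:ℝ) ≤ 3*x/(4*y) := by positivity
      have h2 : (0:ℝ) ≤ 1 - 3*x/(4*y) := by
        rw [sub_nonneg, div_le_one (by positivity)]; linarith
      have := hC hc hd h1 h2 (by ring)
      convert this using 1
      have : (3*x/(4*y)) • ((4:ℝ),(3:ℝ)) + (1 - 3*x/(4*y)) • ((0:ℝ),(3:ℝ))
          = ((3*x/(4*y))*4 + (1-3*x/(4*y))*0, (3*x/(4*y))*3 + (1-3*x/(4*y))*3) := by
        simp [Prod.ext_iff, smul_eq_mul]
      rw [this, Prod.ext_iff]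
      constructor <;> · simp; field_simp; try ring
    have h1 : (0:ℝ) ≤ 1 - y/3 := by rw [sub_nonneg, div_le_one (by norm_num)]; linarith
    have h2 : (0:ℝ) ≤ y/3 := by positivity
    have := hC ha hq h1 h2 (by ring)
    convert this using 1
    rw [Prod.ext_iff]
    constructor <;> (simp [smul_eq_mul]; try field_simp; try ring)
  · exact (isOpen_lt continuous_const continuous_fst).and
      ((isOpen_lt continuous_snd continuous_const).and
        (isOpen_lt (continuous_const.mul continuous_fst) (continuous_const.mul continuous_snd)))

lemma key2 : ((2:ℝ), (2:ℝ)) ∈ interior (convexHull ℝ ({((4:ℝ),(0:ℝ)), (4,3), (0,3)} : Set (ℝ × ℝ))) := by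
  rw [mem_interior]
  refine ⟨{p : ℝ × ℝ | p.1 < 4 ∧ p.2 < 3 ∧ 12 - 3 * p.1 < 4 * p.2}, ?_, ?_, by norm_num⟩
  · rintro ⟨x, y⟩ ⟨hx, hy, hxy⟩
    simp only at hx hy hxy
    have hy0 : 0 < y := by linarith
    set S : Set (ℝ × ℝ) := {((4:ℝ),(0:ℝ)), (4,3), (0,3)} with hS
    have hC := convex_convexHull ℝ S
    have hb : ((4:ℝ),(0:ℝ)) ∈ convexHull ℝ S := subset_convexHull ℝ S (by simp [hS])
    have hc : ((4:ℝ),(3:ℝ)) ∈ convexHull ℝ S := subset_convexHull ℝ S (by simp [hS])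
    have hd : ((0:ℝ),(3:ℝ)) ∈ convexHull ℝ S := subset_convexHull ℝ S (by simp [hS])
    have hq : (((3*x - 12 + 4*y)/y, 3) : ℝ × ℝ) ∈ convexHull ℝ S := by
      have h1 : (0:ℝ) ≤ (3*x - 12 + 4*y)/(4*y) := by
        apply div_nonneg (by linarith) (by linarith)
      have h2 : (0:ℝ) ≤ 1 - (3*x - 12 + 4*y)/(4*y) := by
        rw [sub_nonneg, div_le_one (by positivity)]; linarith
      have := hC hc hd h1 h2 (by ring)
      convert this using 1
      rw [Prod.ext_iff]
      constructor <;> (simp [smul_eq_mul]; try field_simp; try ring)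
    have h1 : (0:ℝ) ≤ 1 - y/3 := by rw [sub_nonneg, div_le_one (by norm_num)]; linarith
    have h2 : (0:ℝ) ≤ y/3 := by positivity
    have := hC hb hq h1 h2 (by ring)
    convert this using 1
    rw [Prod.ext_iff]
    constructor <;> (simp [smul_eq_mul]; try field_simp; try ring)
  · exact (isOpen_lt continuous_fst continuous_const).and
      ((isOpen_lt continuous_snd continuous_const).and
        (isOpen_lt (continuous_const.sub (continuous_const.mul continuous_fst))
          (continuous_const.mul continuous_snd)))

lemma hull_box (x0 x1 : ℝ) (h : 0 < x1 - x0) :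
    convexHull ℝ ({(x0, 0), (x1, 0), (x1, 3), (x0, 3)} : Set (ℝ × ℝ)) =
      Set.Icc x0 x1 ×ˢ Set.Icc (0:ℝ) 3 := by
  have hle : x0 ≤ x1 := by linarith
  apply Set.Subset.antisymm
  · apply convexHull_min
    · rintro p hp
      simp only [Set.mem_insert_iff, Set.mem_singleton_iff] at hp
      rcases hp with rfl | rfl | rfl | rfl <;>
        simp [Set.mem_prod, Set.mem_Icc, hle] <;> norm_num
    · exact (convex_Icc _ _).prod (convex_Icc _ _)
  · rintro ⟨x, y⟩ hp
    rw [Set.mem_prod] at hp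
    simp only [Set.mem_Icc] at hp
    obtain ⟨⟨hx0, hx1⟩, hy0, hy3⟩ := hp
    set S : Set (ℝ × ℝ) := {(x0, 0), (x1, 0), (x1, 3), (x0, 3)} with hS
    have hC := convex_convexHull ℝ S
    have m1 : ((x0:ℝ), (0:ℝ)) ∈ convexHull ℝ S := subset_convexHull ℝ S (by simp [hS])
    have m2 : ((x1:ℝ), (0:ℝ)) ∈ convexHull ℝ S := subset_convexHull ℝ S (by simp [hS])
    have m3 : ((x1:ℝ), (3:ℝ)) ∈ convexHull ℝ S := subset_convexHull ℝ S (by simp [hS])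
    have m4 : ((x0:ℝ), (3:ℝ)) ∈ convexHull ℝ S := subset_convexHull ℝ S (by simp [hS])
    set t := (x - x0) / (x1 - x0) with ht
    have ht0 : 0 ≤ t := div_nonneg (by linarith) (by linarith)
    have ht1 : 0 ≤ 1 - t := by rw [sub_nonneg, ht, div_le_one h]; linarith
    have hu : ((x:ℝ), (0:ℝ)) ∈ convexHull ℝ S := by
      have := hC m1 m2 ht1 ht0 (by ring)
      convert this using 1
      rw [Prod.ext_iff]
      constructor <;> (simp [smul_eq_mul, ht]; try field_simp; try ring)
    have hv : ((x:ℝ), (3:ℝ)) ∈ convexHull ℝ S := by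
      have := hC m4 m3 ht1 ht0 (by ring)
      convert this using 1
      rw [Prod.ext_iff]
      constructor <;> (simp [smul_eq_mul, ht]; try field_simp; try ring)
    have hs0 : (0:ℝ) ≤ y / 3 := by positivity
    have hs1 : (0:ℝ) ≤ 1 - y / 3 := by rw [sub_nonneg, div_le_one (by norm_num)]; linarith
    have := hC hu hv hs1 hs0 (by ring)
    convert this using 1
    rw [Prod.ext_iff]
    constructor <;> (simp [smul_eq_mul]; try field_simp; try ring)

lemma partB_aux (F G : Finset (ℝ × ℝ))
    (hF : (F : Set (ℝ × ℝ)) ⊆ ({(0,0),(4,0),(4,3),(0,3),(2,2)} : Set (ℝ × ℝ)))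
    (hG : (G : Set (ℝ × ℝ)) ⊆ ({(0,0),(4,0),(4,3),(0,3),(2,2)} : Set (ℝ × ℝ)))
    (h20 : ((2:ℝ),(0:ℝ)) ∈ convexHull ℝ (F : Set (ℝ × ℝ)) ∪ convexHull ℝ (G : Set (ℝ × ℝ)))
    (h0m : ((0:ℝ),(3/2:ℝ)) ∈ convexHull ℝ (F : Set (ℝ × ℝ)) ∪ convexHull ℝ (G : Set (ℝ × ℝ)))
    (h4m : ((4:ℝ),(3/2:ℝ)) ∈ convexHull ℝ (F : Set (ℝ × ℝ)) ∪ convexHull ℝ (G : Set (ℝ × ℝ)))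
    (h23 : ((2:ℝ),(3:ℝ)) ∈ convexHull ℝ (F : Set (ℝ × ℝ)))
    (hiF : ((2:ℝ),(2:ℝ)) ∉ interior (convexHull ℝ (F : Set (ℝ × ℝ))))
    (hiG : ((2:ℝ),(2:ℝ)) ∉ interior (convexHull ℝ (G : Set (ℝ × ℝ)))) : False := by
  -- notation for the four forcing instances
  -- forces (4,3) via L(p)=p.1+p.2 ≤ 4 off (4,3)
  have forceC : ∀ {H : Finset (ℝ × ℝ)}, (H : Set (ℝ × ℝ)) ⊆ ({(0,0),(4,0),(4,3),(0,3),(2,2)} : Set (ℝ × ℝ)) →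
      ∀ {t : ℝ × ℝ}, t ∈ convexHull ℝ (H : Set (ℝ × ℝ)) → 4 < t.1 + t.2 → ((4:ℝ),(3:ℝ)) ∈ H := by
    intro H hH t ht htm
    have := force_mem hH ((4:ℝ),(3:ℝ)) 1 1 4 ?_ ht (by simpa using htm)
    · exact this
    · intro p hp hne
      simp only [Set.mem_insert_iff, Set.mem_singleton_iff] at hp
      rcases hp with rfl | rfl | rfl | rfl | rfl <;> (try norm_num at hne) <;> norm_num
  have forceD : ∀ {H : Finset (ℝ × ℝ)}, (H : Set (ℝ × ℝ)) ⊆ ({(0,0),(4,0),(4,3),(0,3),(2,2)} : Set (ℝ × ℝ)) →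
      ∀ {t : ℝ × ℝ}, t ∈ convexHull ℝ (H : Set (ℝ × ℝ)) → 0 < -t.1 + t.2 → ((0:ℝ),(3:ℝ)) ∈ H := by
    intro H hH t ht htm
    have := force_mem hH ((0:ℝ),(3:ℝ)) (-1) 1 0 ?_ ht (by simpa using htm)
    · exact this
    · intro p hp hne
      simp only [Set.mem_insert_iff, Set.mem_singleton_iff] at hp
      rcases hp with rfl | rfl | rfl | rfl | rfl <;> (try norm_num at hne) <;> norm_num
  have forceA : ∀ {H : Finset (ℝ × ℝ)}, (H : Set (ℝ × ℝ)) ⊆ ({(0,0),(4,0),(4,3),(0,3),(2,2)} : Set (ℝ × ℝ)) →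
      ∀ {t : ℝ × ℝ}, t ∈ convexHull ℝ (H : Set (ℝ × ℝ)) → (-3:ℝ) < -t.1 + -t.2 → ((0:ℝ),(0:ℝ)) ∈ H := by
    intro H hH t ht htm
    have := force_mem hH ((0:ℝ),(0:ℝ)) (-1) (-1) (-3) ?_ ht (by simpa using htm)
    · exact this
    · intro p hp hne
      simp only [Set.mem_insert_iff, Set.mem_singleton_iff] at hp
      rcases hp with rfl | rfl | rfl | rfl | rfl <;> (try norm_num at hne) <;> norm_num
  have forceB : ∀ {H : Finset (ℝ × ℝ)}, (H : Set (ℝ × ℝ)) ⊆ ({(0,0),(4,0),(4,3),(0,3),(2,2)} : Set (ℝ × ℝ)) →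
      ∀ {t : ℝ × ℝ}, t ∈ convexHull ℝ (H : Set (ℝ × ℝ)) → 1 < t.1 + -t.2 → ((4:ℝ),(0:ℝ)) ∈ H := by
    intro H hH t ht htm
    have := force_mem hH ((4:ℝ),(0:ℝ)) 1 (-1) 1 ?_ ht (by simpa using htm)
    · exact this
    · intro p hp hne
      simp only [Set.mem_insert_iff, Set.mem_singleton_iff] at hp
      rcases hp with rfl | rfl | rfl | rfl | rfl <;> (try norm_num at hne) <;> norm_num
  -- interior contradiction from triangles
  have tri1 : ∀ {H : Finset (ℝ × ℝ)}, ((0:ℝ),(0:ℝ)) ∈ H → ((4:ℝ),(3:ℝ)) ∈ H → ((0:ℝ),(3:ℝ)) ∈ H →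
      ((2:ℝ),(2:ℝ)) ∈ interior (convexHull ℝ (H : Set (ℝ × ℝ))) := by
    intro H h1 h2 h3
    refine interior_mono (convexHull_mono ?_) key1
    rintro p hp
    simp only [Set.mem_insert_iff, Set.mem_singleton_iff] at hp
    rcases hp with rfl | rfl | rfl <;> exact_mod_cast ‹_›
  have tri2 : ∀ {H : Finset (ℝ × ℝ)}, ((4:ℝ),(0:ℝ)) ∈ H → ((4:ℝ),(3:ℝ)) ∈ H → ((0:ℝ),(3:ℝ)) ∈ H →
      ((2:ℝ),(2:ℝ)) ∈ interior (convexHull ℝ (H : Set (ℝ × ℝ))) := by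
    intro H h1 h2 h3
    refine interior_mono (convexHull_mono ?_) key2
    rintro p hp
    simp only [Set.mem_insert_iff, Set.mem_singleton_iff] at hp
    rcases hp with rfl | rfl | rfl <;> exact_mod_cast ‹_›
  -- main combinatorics
  have hcF : ((4:ℝ),(3:ℝ)) ∈ F := forceC hF h23 (by norm_num)
  have hdF : ((0:ℝ),(3:ℝ)) ∈ F := forceD hF h23 (by norm_num)
  have noA : ((0:ℝ),(0:ℝ)) ∉ F := fun ha => hiF (tri1 ha hcF hdF)
  have noB : ((4:ℝ),(0:ℝ)) ∉ F := fun hb => hiF (tri2 hb hcF hdF)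
  have haG : ((0:ℝ),(0:ℝ)) ∈ G := by
    rcases h20 with h | h
    · exact absurd (forceA hF h (by norm_num)) noA
    · exact forceA hG h (by norm_num)
  have hdG : ((0:ℝ),(3:ℝ)) ∈ G := by
    rcases h0m with h | h
    · exact absurd (forceA hF h (by norm_num)) noA
    · exact forceD hG h (by norm_num)
  have hcG : ((4:ℝ),(3:ℝ)) ∈ G := by
    rcases h4m with h | h
    · exact absurd (forceB hF h (by norm_num)) noB
    · exact forceC hG h (by norm_num)
  exact hiG (tri1 haG hcG hdG)

lemma hullQ_eq :
    convexHull ℝ ({(0, 0), (4, 0), (4, 3), (0, 3), (2, 2)} : Set (ℝ × ℝ)) =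
      Set.Icc (0:ℝ) 4 ×ˢ Set.Icc (0:ℝ) 3 := by
  apply Set.Subset.antisymm
  · apply convexHull_min
    · rintro p hp
      simp only [Set.mem_insert_iff, Set.mem_singleton_iff] at hp
      rcases hp with rfl | rfl | rfl | rfl | rfl <;>
        simp only [Set.mem_prod, Set.mem_Icc] <;> norm_num
    · exact (convex_Icc _ _).prod (convex_Icc _ _)
  · rw [← hull_box 0 4 (by norm_num)]
    apply convexHull_mono
    intro p hp
    simp only [Set.mem_insert_iff, Set.mem_singleton_iff] at hp ⊢
    tauto

/-- For `Q = {(0,0), (4,0), (4,3), (0,3), (2,2)}`: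
(a) there is a convex *tiling* of `conv Q` by two closed convex polygons (vertices
arbitrary) with disjoint interiors, no point of `Q` interior to either polygon;
(b) there is no such *partition* by two convex polygons all of whose vertices lie
in `Q`. -/
theorem tiling_two_but_partition_needs_three :
    let Q : Set (ℝ × ℝ) := {(0, 0), (4, 0), (4, 3), (0, 3), (2, 2)}
    (∃ F₁ F₂ : Finset (ℝ × ℝ),
        convexHull ℝ (F₁ : Set (ℝ × ℝ)) ∪ convexHull ℝ (F₂ : Set (ℝ × ℝ)) = convexHull ℝ Q ∧
        Disjoint (interior (convexHull ℝ (F₁ : Set (ℝ × ℝ))))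
          (interior (convexHull ℝ (F₂ : Set (ℝ × ℝ)))) ∧
        ∀ p ∈ Q, p ∉ interior (convexHull ℝ (F₁ : Set (ℝ × ℝ))) ∧
          p ∉ interior (convexHull ℝ (F₂ : Set (ℝ × ℝ)))) ∧
    ¬ (∃ F₁ F₂ : Finset (ℝ × ℝ), (F₁ : Set (ℝ × ℝ)) ⊆ Q ∧ (F₂ : Set (ℝ × ℝ)) ⊆ Q ∧
        convexHull ℝ (F₁ : Set (ℝ × ℝ)) ∪ convexHull ℝ (F₂ : Set (ℝ × ℝ)) = convexHull ℝ Q ∧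
        Disjoint (interior (convexHull ℝ (F₁ : Set (ℝ × ℝ))))
          (interior (convexHull ℝ (F₂ : Set (ℝ × ℝ)))) ∧
        ∀ p ∈ Q, p ∉ interior (convexHull ℝ (F₁ : Set (ℝ × ℝ))) ∧
          p ∉ interior (convexHull ℝ (F₂ : Set (ℝ × ℝ)))) := by
  intro Q
  have hQdef : Q = ({(0, 0), (4, 0), (4, 3), (0, 3), (2, 2)} : Set (ℝ × ℝ)) := rfl
  constructor
  · -- part (a)
    refine ⟨({(0,0),(2,0),(2,3),(0,3)} : Finset (ℝ × ℝ)),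
           ({(2,0),(4,0),(4,3),(2,3)} : Finset (ℝ × ℝ)), ?_, ?_, ?_⟩
    all_goals
      have hc1 : (({(0,0),(2,0),(2,3),(0,3)} : Finset (ℝ × ℝ)) : Set (ℝ × ℝ)) =
          ({((0:ℝ),(0:ℝ)),(2,0),(2,3),(0,3)} : Set (ℝ × ℝ)) := by simp
      have hc2 : (({(2,0),(4,0),(4,3),(2,3)} : Finset (ℝ × ℝ)) : Set (ℝ × ℝ)) =
          ({((2:ℝ),(0:ℝ)),(4,0),(4,3),(2,3)} : Set (ℝ × ℝ)) := by simp
      have hb1 : convexHull ℝ (({(0,0),(2,0),(2,3),(0,3)} : Finset (ℝ × ℝ)) : Set (ℝ × ℝ)) =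
          Set.Icc (0:ℝ) 2 ×ˢ Set.Icc (0:ℝ) 3 := by
        rw [hc1]; exact hull_box 0 2 (by norm_num)
      have hb2 : convexHull ℝ (({(2,0),(4,0),(4,3),(2,3)} : Finset (ℝ × ℝ)) : Set (ℝ × ℝ)) =
          Set.Icc (2:ℝ) 4 ×ˢ Set.Icc (0:ℝ) 3 := by
        rw [hc2]; exact hull_box 2 4 (by norm_num)
      rw [hb1, hb2]
    · -- union
      rw [hQdef, hullQ_eq]
      ext ⟨x, y⟩
      simp only [Set.mem_union, Set.mem_prod, Set.mem_Icc]
      constructor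
      · rintro (⟨⟨h1, h2⟩, hy⟩ | ⟨⟨h1, h2⟩, hy⟩) <;> exact ⟨⟨by linarith, by linarith⟩, hy⟩
      · rintro ⟨⟨h1, h2⟩, hy⟩
        rcases le_total x 2 with h | h
        · exact Or.inl ⟨⟨h1, h⟩, hy⟩
        · exact Or.inr ⟨⟨h, h2⟩, hy⟩
    · -- disjoint interiors
      rw [interior_prod_eq, interior_prod_eq, interior_Icc, interior_Icc, interior_Icc]
      rw [Set.disjoint_left]
      rintro ⟨x, y⟩ ⟨hx, -⟩ ⟨hx', -⟩
      simp only [Set.mem_Ioo] at hx hx'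
      linarith [hx.2, hx'.1]
    · -- no point of Q interior
      rw [interior_prod_eq, interior_prod_eq, interior_Icc, interior_Icc, interior_Icc]
      intro p hp
      rw [hQdef] at hp
      simp only [Set.mem_insert_iff, Set.mem_singleton_iff] at hp
      rcases hp with rfl | rfl | rfl | rfl | rfl <;>
        constructor <;> (intro h; rw [Set.mem_prod] at h; simp only [Set.mem_Ioo] at h) <;>
          norm_num at h
  · -- part (b)
    rintro ⟨F₁, F₂, hF₁, hF₂, hun, -, hni⟩
    have hQbox : convexHull ℝ Q = Set.Icc (0:ℝ) 4 ×ˢ Set.Icc (0:ℝ) 3 := by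
      rw [hQdef]; exact hullQ_eq
    have hmem : ∀ t : ℝ × ℝ, t ∈ Set.Icc (0:ℝ) 4 ×ˢ Set.Icc (0:ℝ) 3 →
        t ∈ convexHull ℝ (F₁ : Set (ℝ × ℝ)) ∪ convexHull ℝ (F₂ : Set (ℝ × ℝ)) := by
      intro t ht; rw [hun, hQbox]; exact ht
    have h23 := hmem ((2:ℝ),(3:ℝ)) (by simp only [Set.mem_prod, Set.mem_Icc]; norm_num)
    have h20 := hmem ((2:ℝ),(0:ℝ)) (by simp only [Set.mem_prod, Set.mem_Icc]; norm_num)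
    have h0m := hmem ((0:ℝ),(3/2:ℝ)) (by simp only [Set.mem_prod, Set.mem_Icc]; norm_num)
    have h4m := hmem ((4:ℝ),(3/2:ℝ)) (by simp only [Set.mem_prod, Set.mem_Icc]; norm_num)
    have hint := hni ((2:ℝ),(2:ℝ)) (by rw [hQdef]; simp)
    rcases h23 with h | h
    · exact partB_aux F₁ F₂ (hQdef ▸ hF₁) (hQdef ▸ hF₂) h20 h0m h4m h hint.1 hint.2
    · exact partB_aux F₂ F₁ (hQdef ▸ hF₂) (hQdef ▸ hF₁)
        (Set.union_comm _ _ ▸ h20) (Set.union_comm _ _ ▸ h0m) (Set.union_comm _ _ ▸ h4m)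
        h hint.2 hint.1
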